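/- For every integer k ≥ 0 and every positive integer t, the odd subdivision T_{2k+1}(K_t) of the complete graph K_t is layered. -/

import Mathlib

open SimpleGraph

/-- The hypercube graph `Q_n`. -/
def hypercube (n : ℕ) : SimpleGraph (Finset (Fin n)) where
  Adj A B := (A ⊆ B ∧ B.card = A.card + 1) ∨ (B ⊆ A ∧ A.card = B.card + 1)
  symm := ⟨fun A B h => h.symm⟩
  loopless := ⟨by
    intro A h
    rcases h with ⟨-, h⟩ | ⟨-, h⟩ <;> omega⟩

/-- A graph is layered if it is isomorphic to a subgraph of an edge layer of a hypercube. -/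
def IsLayered {V : Type*} (G : SimpleGraph V) : Prop :=
  ∃ (n k : ℕ) (f : V → Finset (Fin n)), Function.Injective f ∧
    (∀ v, (f v).card = k ∨ (f v).card + 1 = k) ∧
    ∀ u v, G.Adj u v → (hypercube n).Adj (f u) (f v)

/-- The `m`-subdivision `T_m(K_t)` of the complete graph `K_t`: each edge `{i,j}` (`i < j`) is
replaced by a path `i, ((i,j),0), …, ((i,j),m-1), j` with `m` new internal vertices. -/
def subdividedComplete (t m : ℕ) :
    SimpleGraph (Fin t ⊕ ({p : Fin t × Fin t // p.1 < p.2} × Fin m)) :=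
  SimpleGraph.fromRel (fun x y =>
    match x, y with
    | Sum.inl u, Sum.inr (e, l) => (u = e.1.1 ∧ l.val = 0) ∨ (u = e.1.2 ∧ l.val = m - 1)
    | Sum.inr (e, l), Sum.inr (e', l') => e = e' ∧ l.val + 1 = l'.val
    | _, _ => False)

/-! ### Auxiliary construction -/

/-- Cardinality of an interval filter in `Fin N`. -/
lemma card_val_filter (N a b : ℕ) (hb : b ≤ N) :
    ((Finset.univ : Finset (Fin N)).filter (fun r => a ≤ r.val ∧ r.val < b)).card = b - a := by
  rw [← Nat.card_Ico a b, ← Finset.card_image_of_injective _ Fin.val_injective]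
  congr 1
  ext n
  simp only [Finset.mem_image, Finset.mem_filter, Finset.mem_univ, true_and, Finset.mem_Ico]
  constructor
  · rintro ⟨r, ⟨h1, h2⟩, rfl⟩; exact ⟨h1, h2⟩
  · rintro ⟨h1, h2⟩; exact ⟨⟨n, lt_of_lt_of_le h2 hb⟩, ⟨h1, h2⟩, rfl⟩

/-- The set assigned to an original vertex `i` of `K_t`. -/
def vset (t k : ℕ) (i : Fin t) : Finset (Fin t × Fin (k+1)) :=
  Finset.univ.filter (fun p => p.1 = i)

/-- The set assigned to the `l`-th internal vertex of the edge `{i,j}`. -/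
def eset (t k : ℕ) (i j : Fin t) (l : ℕ) : Finset (Fin t × Fin (k+1)) :=
  Finset.univ.filter
    (fun p => (p.1 = j ∧ p.2.val < (l+2)/2) ∨ (p.1 = i ∧ (l+1)/2 ≤ p.2.val))

lemma mem_vset {t k : ℕ} {i : Fin t} {p : Fin t × Fin (k+1)} :
    p ∈ vset t k i ↔ p.1 = i := by simp [vset]

lemma mem_eset {t k : ℕ} {i j : Fin t} {l : ℕ} {p : Fin t × Fin (k+1)} :
    p ∈ eset t k i j l ↔
      (p.1 = j ∧ p.2.val < (l+2)/2) ∨ (p.1 = i ∧ (l+1)/2 ≤ p.2.val) := by simp [eset]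

lemma card_vset (t k : ℕ) (i : Fin t) : (vset t k i).card = k + 1 := by
  have h : vset t k i = Finset.univ.image (fun r : Fin (k+1) => (i, r)) := by
    ext ⟨p1, p2⟩
    simp [mem_vset, Prod.ext_iff, eq_comm]
  rw [h, Finset.card_image_of_injective _ (fun a b hab => (Prod.ext_iff.mp hab).2),
    Finset.card_univ, Fintype.card_fin]

lemma card_eset (t k : ℕ) (i j : Fin t) (hij : i ≠ j) (l : ℕ) (hl : l ≤ 2*k) :
    (eset t k i j l).card = (l+2)/2 + (k+1 - (l+1)/2) := by
  have h : eset t k i j l =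
      ((Finset.univ : Finset (Fin (k+1))).filter
          (fun r => 0 ≤ r.val ∧ r.val < (l+2)/2)).image (fun r => (j, r))
        ∪ ((Finset.univ : Finset (Fin (k+1))).filter
          (fun r => (l+1)/2 ≤ r.val ∧ r.val < k+1)).image (fun r => (i, r)) := by
    ext ⟨p1, p2⟩
    simp only [mem_eset, Finset.mem_union, Finset.mem_image, Finset.mem_filter,
      Finset.mem_univ, true_and, Prod.mk.injEq]
    constructor
    · rintro (⟨rfl, h2⟩ | ⟨rfl, h2⟩)
      · exact Or.inl ⟨p2, ⟨Nat.zero_le _, h2⟩, rfl, rfl⟩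
      · exact Or.inr ⟨p2, ⟨h2, p2.isLt⟩, rfl, rfl⟩
    · rintro (⟨r, ⟨_, h2⟩, rfl, rfl⟩ | ⟨r, ⟨h2, _⟩, rfl, rfl⟩)
      · exact Or.inl ⟨rfl, h2⟩
      · exact Or.inr ⟨rfl, h2⟩
  have hdisj : Disjoint
      (((Finset.univ : Finset (Fin (k+1))).filter
          (fun r => 0 ≤ r.val ∧ r.val < (l+2)/2)).image (fun r => (j, r)))
      (((Finset.univ : Finset (Fin (k+1))).filter
          (fun r => (l+1)/2 ≤ r.val ∧ r.val < k+1)).image (fun r => (i, r))) := by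
    rw [Finset.disjoint_left]
    rintro ⟨p1, p2⟩ hp hq
    simp only [Finset.mem_image, Prod.mk.injEq] at hp hq
    obtain ⟨r, _, hr1, _⟩ := hp
    obtain ⟨s, _, hs1, _⟩ := hq
    exact hij (hs1.trans hr1.symm ▸ rfl)
  rw [h, Finset.card_union_of_disjoint hdisj,
    Finset.card_image_of_injective _ (fun a b hab => (Prod.ext_iff.mp hab).2),
    Finset.card_image_of_injective _ (fun a b hab => (Prod.ext_iff.mp hab).2),
    card_val_filter _ _ _ (by omega), card_val_filter _ _ _ (by omega)]
  omega

lemma eset_mono (t k : ℕ) (i j : Fin t) {l l' : ℕ}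
    (h1 : (l+2)/2 ≤ (l'+2)/2) (h2 : (l'+1)/2 ≤ (l+1)/2) :
    eset t k i j l ⊆ eset t k i j l' := by
  intro p hp
  rw [mem_eset] at hp ⊢
  rcases hp with ⟨h, hh⟩ | ⟨h, hh⟩
  · exact Or.inl ⟨h, by omega⟩
  · exact Or.inr ⟨h, by omega⟩

lemma vset_subset_eset_zero (t k : ℕ) (i j : Fin t) :
    vset t k i ⊆ eset t k i j 0 := by
  intro p hp
  exact mem_eset.mpr (Or.inr ⟨mem_vset.mp hp, by omega⟩)

lemma vset_subset_eset_last (t k : ℕ) (i j : Fin t) :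
    vset t k j ⊆ eset t k i j (2*k) := by
  intro p hp
  refine mem_eset.mpr (Or.inl ⟨mem_vset.mp hp, ?_⟩)
  have := p.2.isLt
  omega

/-- The vertex map of the subdivided complete graph into the product grid. -/
def Sfun (t k : ℕ) :
    (Fin t ⊕ ({p : Fin t × Fin t // p.1 < p.2} × Fin (2*k+1))) →
      Finset (Fin t × Fin (k+1))
  | Sum.inl i => vset t k i
  | Sum.inr (e, l) => eset t k e.1.1 e.1.2 l.val

lemma eq_of_lt_iff {k : ℕ} (c c' : ℕ) (hc : c ≤ k+1) (hc' : c' ≤ k+1)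
    (h : ∀ r : ℕ, r ≤ k → (r < c ↔ r < c')) : c = c' := by
  rcases lt_trichotomy c c' with hlt | he | hlt
  · have := (h c (by omega)).mpr hlt; omega
  · exact he
  · have := (h c' (by omega)).mp hlt; omega

lemma eq_of_le_iff {k : ℕ} (d d' : ℕ) (hd : d ≤ k+1) (hd' : d' ≤ k+1)
    (h : ∀ r : ℕ, r ≤ k → (d ≤ r ↔ d' ≤ r)) : d = d' := by
  rcases lt_trichotomy d d' with hlt | he | hlt
  · have := (h d (by omega)).mp (le_refl d); omega
  · exact he
  · have := (h d' (by omega)).mpr (le_refl d'); omega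

lemma Sfun_injective (t k : ℕ) : Function.Injective (Sfun t k) := by
  rintro (i | ⟨⟨⟨i, j⟩, hij⟩, l⟩) (i' | ⟨⟨⟨i', j'⟩, hij'⟩, l'⟩) h
  · -- inl, inl
    have h' : vset t k i = vset t k i' := h
    have hm : ((i, (0 : Fin (k+1)))) ∈ vset t k i := mem_vset.mpr rfl
    rw [h'] at hm
    have : i = i' := mem_vset.mp hm
    rw [this]
  · -- inl, inr
    exfalso
    have h' : vset t k i = eset t k i' j' l'.val := h
    have hm1 : ((j', (⟨0, by omega⟩ : Fin (k+1)))) ∈ eset t k i' j' l'.val :=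
      mem_eset.mpr (Or.inl ⟨rfl, show (0:ℕ) < (l'.val+2)/2 by omega⟩)
    have hm2 : ((i', (⟨k, by omega⟩ : Fin (k+1)))) ∈ eset t k i' j' l'.val :=
      mem_eset.mpr (Or.inr ⟨rfl, show (l'.val+1)/2 ≤ k by have := l'.isLt; omega⟩)
    rw [← h'] at hm1 hm2
    have e1 : j' = i := mem_vset.mp hm1
    have e2 : i' = i := mem_vset.mp hm2
    exact absurd (e2.trans e1.symm) (ne_of_lt hij')
  · -- inr, inl
    exfalso
    have h' : eset t k i j l.val = vset t k i' := h
    have hm1 : ((j, (⟨0, by omega⟩ : Fin (k+1)))) ∈ eset t k i j l.val :=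
      mem_eset.mpr (Or.inl ⟨rfl, show (0:ℕ) < (l.val+2)/2 by omega⟩)
    have hm2 : ((i, (⟨k, by omega⟩ : Fin (k+1)))) ∈ eset t k i j l.val :=
      mem_eset.mpr (Or.inr ⟨rfl, show (l.val+1)/2 ≤ k by have := l.isLt; omega⟩)
    rw [h'] at hm1 hm2
    have e1 : j = i' := mem_vset.mp hm1
    have e2 : i = i' := mem_vset.mp hm2
    exact absurd (e2.trans e1.symm) (ne_of_lt hij)
  · -- inr, inr
    have h' : eset t k i j l.val = eset t k i' j' l'.val := h
    have hlk : l.val ≤ 2*k := by have := l.isLt; omega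
    have hlk' : l'.val ≤ 2*k := by have := l'.isLt; omega
    have mj0 : ((j, (⟨0, by omega⟩ : Fin (k+1)))) ∈ eset t k i' j' l'.val := by
      rw [← h']
      exact mem_eset.mpr (Or.inl ⟨rfl, show (0:ℕ) < (l.val+2)/2 by omega⟩)
    have mik : ((i, (⟨k, by omega⟩ : Fin (k+1)))) ∈ eset t k i' j' l'.val := by
      rw [← h']
      exact mem_eset.mpr (Or.inr ⟨rfl, show (l.val+1)/2 ≤ k by omega⟩)
    have mj'0 : ((j', (⟨0, by omega⟩ : Fin (k+1)))) ∈ eset t k i j l.val := by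
      rw [h']
      exact mem_eset.mpr (Or.inl ⟨rfl, show (0:ℕ) < (l'.val+2)/2 by omega⟩)
    have mi'k : ((i', (⟨k, by omega⟩ : Fin (k+1)))) ∈ eset t k i j l.val := by
      rw [h']
      exact mem_eset.mpr (Or.inr ⟨rfl, show (l'.val+1)/2 ≤ k by omega⟩)
    rw [mem_eset] at mj0 mik mj'0 mi'k
    simp only [Fin.ext_iff] at mj0 mik mj'0 mi'k
    have hij2 : (i : ℕ) < j := hij
    have hij2' : (i' : ℕ) < j' := hij'
    have hii' : (i : ℕ) = i' ∧ (j : ℕ) = j' := by omega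
    have hieq : i = i' := Fin.ext hii'.1
    have hjeq : j = j' := Fin.ext hii'.2
    subst hieq; subst hjeq
    -- now show l = l'
    have hkey1 : ∀ r : ℕ, r ≤ k → (r < (l.val+2)/2 ↔ r < (l'.val+2)/2) := by
      intro r hr
      have hne : ¬ (j = i) := (ne_of_gt hij)
      constructor
      · intro hrc
        have hmem : ((j, (⟨r, by omega⟩ : Fin (k+1)))) ∈ eset t k i j l.val :=
          mem_eset.mpr (Or.inl ⟨rfl, hrc⟩)
        rw [h'] at hmem
        rcases mem_eset.mp hmem with ⟨_, h2⟩ | ⟨h2, _⟩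
        · exact h2
        · exact absurd (h2 : j = i) hne
      · intro hrc
        have hmem : ((j, (⟨r, by omega⟩ : Fin (k+1)))) ∈ eset t k i j l'.val :=
          mem_eset.mpr (Or.inl ⟨rfl, hrc⟩)
        rw [← h'] at hmem
        rcases mem_eset.mp hmem with ⟨_, h2⟩ | ⟨h2, _⟩
        · exact h2
        · exact absurd (h2 : j = i) hne
    have hkey2 : ∀ r : ℕ, r ≤ k → ((l.val+1)/2 ≤ r ↔ (l'.val+1)/2 ≤ r) := by
      intro r hr
      have hne : ¬ (i = j) := (ne_of_lt hij)
      constructor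
      · intro hrd
        have hmem : ((i, (⟨r, by omega⟩ : Fin (k+1)))) ∈ eset t k i j l.val :=
          mem_eset.mpr (Or.inr ⟨rfl, hrd⟩)
        rw [h'] at hmem
        rcases mem_eset.mp hmem with ⟨h2, _⟩ | ⟨_, h2⟩
        · exact absurd (h2 : i = j) hne
        · exact h2
      · intro hrd
        have hmem : ((i, (⟨r, by omega⟩ : Fin (k+1)))) ∈ eset t k i j l'.val :=
          mem_eset.mpr (Or.inr ⟨rfl, hrd⟩)
        rw [← h'] at hmem
        rcases mem_eset.mp hmem with ⟨h2, _⟩ | ⟨_, h2⟩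
        · exact absurd (h2 : i = j) hne
        · exact h2
    have hc : (l.val+2)/2 = (l'.val+2)/2 :=
      eq_of_lt_iff _ _ (by omega) (by omega) hkey1
    have hd : (l.val+1)/2 = (l'.val+1)/2 :=
      eq_of_le_iff _ _ (by omega) (by omega) hkey2
    have hll : l = l' := Fin.ext (by omega)
    rw [hll]

/-- For every integer `k ≥ 0` and positive integer `t`, the odd subdivision
`T_{2k+1}(K_t)` is layered. -/
theorem odd_subdivision_complete_layered (k t : ℕ) (ht : 1 ≤ t) :
    IsLayered (subdividedComplete t (2 * k + 1)) := by
  classical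
  refine ⟨t * (k+1), k + 2,
    fun v => (Sfun t k v).map finProdFinEquiv.toEmbedding, ?_, ?_, ?_⟩
  · -- injectivity
    intro u v huv
    exact Sfun_injective t k (Finset.map_injective _ huv)
  · -- cardinalities
    rintro (i | ⟨e, l⟩)
    · right
      rw [Finset.card_map]
      show (vset t k i).card + 1 = k + 2
      rw [card_vset]
    · rw [Finset.card_map]
      show (eset t k e.1.1 e.1.2 l.val).card = k + 2 ∨
        (eset t k e.1.1 e.1.2 l.val).card + 1 = k + 2
      rw [card_eset t k e.1.1 e.1.2 (ne_of_lt e.2) l.val (by have := l.isLt; omega)]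
      have := l.isLt
      omega
  · -- adjacency
    rintro (u | ⟨e, l⟩) (v | ⟨e', l'⟩) hadj <;>
      rw [subdividedComplete, SimpleGraph.fromRel_adj] at hadj <;>
      obtain ⟨hne, hrel⟩ := hadj
    · rcases hrel with hrel | hrel <;> exact hrel.elim
    · -- inl u, inr (e', l')
      rcases hrel with hrel | hrel
      swap
      · exact hrel.elim
      rcases hrel with ⟨rfl, hl0⟩ | ⟨rfl, hlast⟩
      · -- first internal vertex
        refine Or.inl ⟨Finset.map_subset_map.mpr ?_, ?_⟩
        · show vset t k e'.1.1 ⊆ eset t k e'.1.1 e'.1.2 l'.val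
          rw [hl0]
          exact vset_subset_eset_zero t k _ _
        · rw [Finset.card_map, Finset.card_map]
          show (eset t k e'.1.1 e'.1.2 l'.val).card = (vset t k e'.1.1).card + 1
          rw [card_vset, card_eset t k _ _ (ne_of_lt e'.2) l'.val (by have := l'.isLt; omega),
            hl0]
          omega
      · -- last internal vertex
        have hl2k : l'.val = 2*k := by omega
        refine Or.inl ⟨Finset.map_subset_map.mpr ?_, ?_⟩
        · show vset t k e'.1.2 ⊆ eset t k e'.1.1 e'.1.2 l'.val
          rw [hl2k]
          exact vset_subset_eset_last t k _ _
        · rw [Finset.card_map, Finset.card_map]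
          show (eset t k e'.1.1 e'.1.2 l'.val).card = (vset t k e'.1.2).card + 1
          rw [card_vset, card_eset t k _ _ (ne_of_lt e'.2) l'.val (by have := l'.isLt; omega),
            hl2k]
          omega
    · -- inr (e, l), inl v
      rcases hrel with hrel | hrel
      · exact hrel.elim
      rcases hrel with ⟨rfl, hl0⟩ | ⟨rfl, hlast⟩
      · refine Or.inr ⟨Finset.map_subset_map.mpr ?_, ?_⟩
        · show vset t k e.1.1 ⊆ eset t k e.1.1 e.1.2 l.val
          rw [hl0]
          exact vset_subset_eset_zero t k _ _
        · rw [Finset.card_map, Finset.card_map]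
          show (eset t k e.1.1 e.1.2 l.val).card = (vset t k e.1.1).card + 1
          rw [card_vset, card_eset t k _ _ (ne_of_lt e.2) l.val (by have := l.isLt; omega),
            hl0]
          omega
      · have hl2k : l.val = 2*k := by omega
        refine Or.inr ⟨Finset.map_subset_map.mpr ?_, ?_⟩
        · show vset t k e.1.2 ⊆ eset t k e.1.1 e.1.2 l.val
          rw [hl2k]
          exact vset_subset_eset_last t k _ _
        · rw [Finset.card_map, Finset.card_map]
          show (eset t k e.1.1 e.1.2 l.val).card = (vset t k e.1.2).card + 1
          rw [card_vset, card_eset t k _ _ (ne_of_lt e.2) l.val (by have := l.isLt; omega),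
            hl2k]
          omega
    · -- inr (e, l), inr (e', l')
      have hlk : l.val ≤ 2*k := by have := l.isLt; omega
      have hlk' : l'.val ≤ 2*k := by have := l'.isLt; omega
      rcases hrel with ⟨rfl, hstep⟩ | ⟨rfl, hstep⟩
      · rcases Nat.mod_two_eq_zero_or_one l.val with hp | hp
        · -- l even : x_{l+1} ⊆ x_l
          refine Or.inr ⟨Finset.map_subset_map.mpr ?_, ?_⟩
          · show eset t k e.1.1 e.1.2 l'.val ⊆ eset t k e.1.1 e.1.2 l.val
            exact eset_mono t k _ _ (by omega) (by omega)
          · rw [Finset.card_map, Finset.card_map]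
            show (eset t k e.1.1 e.1.2 l.val).card = (eset t k e.1.1 e.1.2 l'.val).card + 1
            rw [card_eset t k _ _ (ne_of_lt e.2) l.val hlk,
              card_eset t k _ _ (ne_of_lt e.2) l'.val hlk']
            omega
        · -- l odd : x_l ⊆ x_{l+1}
          refine Or.inl ⟨Finset.map_subset_map.mpr ?_, ?_⟩
          · show eset t k e.1.1 e.1.2 l.val ⊆ eset t k e.1.1 e.1.2 l'.val
            exact eset_mono t k _ _ (by omega) (by omega)
          · rw [Finset.card_map, Finset.card_map]
            show (eset t k e.1.1 e.1.2 l'.val).card = (eset t k e.1.1 e.1.2 l.val).card + 1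
            rw [card_eset t k _ _ (ne_of_lt e.2) l.val hlk,
              card_eset t k _ _ (ne_of_lt e.2) l'.val hlk']
            omega
      · -- reversed orientation: l'.val + 1 = l.val
        rcases Nat.mod_two_eq_zero_or_one l'.val with hp | hp
        · refine Or.inl ⟨Finset.map_subset_map.mpr ?_, ?_⟩
          · show eset t k e'.1.1 e'.1.2 l.val ⊆ eset t k e'.1.1 e'.1.2 l'.val
            exact eset_mono t k _ _ (by omega) (by omega)
          · rw [Finset.card_map, Finset.card_map]
            show (eset t k e'.1.1 e'.1.2 l'.val).card = (eset t k e'.1.1 e'.1.2 l.val).card + 1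
            rw [card_eset t k _ _ (ne_of_lt e'.2) l.val hlk,
              card_eset t k _ _ (ne_of_lt e'.2) l'.val hlk']
            omega
        · refine Or.inr ⟨Finset.map_subset_map.mpr ?_, ?_⟩
          · show eset t k e'.1.1 e'.1.2 l'.val ⊆ eset t k e'.1.1 e'.1.2 l.val
            exact eset_mono t k _ _ (by omega) (by omega)
          · rw [Finset.card_map, Finset.card_map]
            show (eset t k e'.1.1 e'.1.2 l.val).card = (eset t k e'.1.1 e'.1.2 l'.val).card + 1
            rw [card_eset t k _ _ (ne_of_lt e'.2) l.val hlk,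
              card_eset t k _ _ (ne_of_lt e'.2) l'.val hlk']
            omega
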